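/- arXiv:1712.00150 — 2 statements merged into one kernel-verified Lean document; each statement's English description precedes it below -/
import Mathlib

section
/- The standard pattern T(14,4) = {(14x+4y, y) : x, y ∈ ℤ} is a (5,5) broadcast on the infinite grid; consequently there is a (5,5) broadcast of density 1/14, which is strictly less than 1/13, the optimal density of a (3,1) broadcast, so the optimal (3,1) and (5,5) broadcast densities are not equal. -/
open Filter Topology

/-- Graph (L¹) distance on the infinite grid ℤ×ℤ. -/
def gridDist (u v : ℤ × ℤ) : ℕ := (u.1 - v.1).natAbs + (u.2 - v.2).natAbs

open Classical in
/-- Total signal received at `v` from towers of strength `t` located at the points of `S`: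
the finite sum `∑_{T ∈ S, dist(v,T) < t} (t − dist(v,T))`. -/
noncomputable def totalSignal (t : ℕ) (S : Set (ℤ × ℤ)) (v : ℤ × ℤ) : ℕ :=
  ∑ T ∈ (Finset.Icc (v.1 - (t : ℤ)) (v.1 + (t : ℤ)) ×ˢ
      Finset.Icc (v.2 - (t : ℤ)) (v.2 + (t : ℤ))).filter
      (fun T => T ∈ S ∧ gridDist v T < t),
    (t - gridDist v T)

/-- `S` is a `(t,r)` broadcast if every vertex receives total signal at least `r`. -/
def IsBroadcast (t r : ℕ) (S : Set (ℤ × ℤ)) : Prop :=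
  ∀ v : ℤ × ℤ, r ≤ totalSignal t S v

/-- The standard pattern `T(d,e) = {(dx+ey, y) : x, y ∈ ℤ}`. -/
def stdPattern (d e : ℤ) : Set (ℤ × ℤ) := {p | ∃ x y : ℤ, p = (d * x + e * y, y)}

open Classical in
/-- The number of points of `S` in the square `V_n = {(a,b) : |a| ≤ n, |b| ≤ n}`. -/
noncomputable def gridCount (S : Set (ℤ × ℤ)) (n : ℕ) : ℕ :=
  ((Finset.Icc (-(n : ℤ)) (n : ℤ) ×ˢ Finset.Icc (-(n : ℤ)) (n : ℤ)).filter
    (fun v => v ∈ S)).card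

/-! ### Auxiliary material -/

/-- Computable version of the signal for the pattern `T(14,4)` with strength 5. -/
noncomputable def sig (v : ℤ × ℤ) : ℕ :=
  ∑ T ∈ (Finset.Icc (v.1 - 5) (v.1 + 5) ×ˢ Finset.Icc (v.2 - 5) (v.2 + 5)).filter
      (fun T => (14:ℤ) ∣ (T.1 - 4 * T.2) ∧ gridDist v T < 5),
    (5 - gridDist v T)

lemma mem_std (p : ℤ × ℤ) : p ∈ stdPattern 14 4 ↔ (14:ℤ) ∣ (p.1 - 4 * p.2) := by
  constructor
  · rintro ⟨x, y, rfl⟩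
    exact ⟨x, by push_cast; ring⟩
  · rintro ⟨k, hk⟩
    exact ⟨k, p.2, by ext <;> simp <;> omega⟩

lemma ts_eq (v : ℤ × ℤ) : totalSignal 5 (stdPattern 14 4) v = sig v := by
  classical
  unfold totalSignal sig
  have h5 : ((5:ℕ) : ℤ) = 5 := by norm_num
  rw [h5]
  refine Finset.sum_congr ?_ (fun _ _ => rfl)
  refine Finset.filter_congr ?_
  intro x _
  rw [mem_std]

lemma sig_shift (v c : ℤ × ℤ) (h : (14:ℤ) ∣ c.1 - 4 * c.2) :
    sig (v.1 + c.1, v.2 + c.2) = sig v := by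
  unfold sig
  refine Finset.sum_nbij' (fun T => (T.1 - c.1, T.2 - c.2))
    (fun T => (T.1 + c.1, T.2 + c.2)) ?_ ?_ ?_ ?_ ?_
  · intro a ha
    replace ha := Finset.mem_filter.mp ha
    refine Finset.mem_filter.mpr ?_
    simp only [Finset.mem_filter, Finset.mem_product, Finset.mem_Icc, gridDist] at ha ⊢
    omega
  · intro a ha
    replace ha := Finset.mem_filter.mp ha
    refine Finset.mem_filter.mpr ?_
    simp only [Finset.mem_filter, Finset.mem_product, Finset.mem_Icc, gridDist] at ha ⊢
    omega
  · intro a _; ext <;> simp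
  · intro a _; ext <;> simp
  · intro a ha
    simp only [Finset.mem_filter, Finset.mem_product, Finset.mem_Icc, gridDist] at ha ⊢
    omega

lemma sig_lower (v : ℤ × ℤ) : 5 ≤ sig v := by
  obtain ⟨r, h0, h14, hdvd⟩ :
      ∃ r : ℤ, 0 ≤ r ∧ r < 14 ∧ (14:ℤ) ∣ (v.1 - r) - 4 * v.2 :=
    ⟨(v.1 - 4 * v.2) % 14, by omega, by omega, by omega⟩
  have h := sig_shift (r, 0) (v.1 - r, v.2) hdvd
  have h2 : ((r : ℤ) + (v.1 - r), (0:ℤ) + v.2) = v := by ext <;> simp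
  rw [h2] at h
  rw [h]
  interval_cases r <;> decide

lemma broadcast_main : IsBroadcast 5 5 (stdPattern 14 4) := by
  intro v
  rw [ts_eq]
  exact sig_lower v

lemma row_eq (c : ℤ) (n : ℕ) :
    ((Finset.Icc (-(n:ℤ)) n).filter (fun a => (14:ℤ) ∣ a - c)) =
    (Finset.Icc ((-(n:ℤ) - c + 13) / 14) (((n:ℤ) - c) / 14)).image (fun q => 14 * q + c) := by
  ext a
  simp only [Finset.mem_filter, Finset.mem_Icc, Finset.mem_image]
  constructor
  · rintro ⟨⟨h1, h2⟩, h3⟩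
    exact ⟨(a - c) / 14, ⟨by omega, by omega⟩, by omega⟩
  · rintro ⟨q, ⟨h1, h2⟩, rfl⟩
    exact ⟨⟨by omega, by omega⟩, by omega⟩

lemma row_card (c : ℤ) (n : ℕ) :
    2 * (n:ℤ) - 12 ≤ 14 * (((Finset.Icc (-(n:ℤ)) n).filter (fun a => (14:ℤ) ∣ a - c)).card : ℤ) ∧
    14 * (((Finset.Icc (-(n:ℤ)) n).filter (fun a => (14:ℤ) ∣ a - c)).card : ℤ) ≤ 2 * n + 14 := by
  rw [row_eq]
  rw [Finset.card_image_of_injective _ (fun a b hab => by omega)]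
  rw [Int.card_Icc]
  omega

open Classical in
lemma gc_eq (n : ℕ) : gridCount (stdPattern 14 4) n =
    ∑ b ∈ Finset.Icc (-(n:ℤ)) n,
      ((Finset.Icc (-(n:ℤ)) n).filter (fun a => (14:ℤ) ∣ a - 4 * b)).card := by
  unfold gridCount
  rw [Finset.card_filter, Finset.sum_product, Finset.sum_comm]
  refine Finset.sum_congr rfl (fun b _ => ?_)
  rw [Finset.card_filter]
  exact Finset.sum_congr rfl (fun a _ => if_congr (mem_std (a, b)) rfl rfl)

lemma gc_bounds (n : ℕ) :
    (2 * (n:ℤ) + 1) * (2 * n - 12) ≤ 14 * (gridCount (stdPattern 14 4) n : ℤ) ∧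
    14 * (gridCount (stdPattern 14 4) n : ℤ) ≤ (2 * (n:ℤ) + 1) * (2 * n + 14) := by
  rw [gc_eq]
  push_cast
  rw [Finset.mul_sum]
  have hcard : (Finset.Icc (-(n:ℤ)) n).card = 2 * n + 1 := by
    rw [Int.card_Icc]; omega
  constructor
  · calc (2 * (n:ℤ) + 1) * (2 * n - 12) = ∑ _b ∈ Finset.Icc (-(n:ℤ)) n, (2 * (n:ℤ) - 12) := by
          rw [Finset.sum_const, hcard]; push_cast; ring
      _ ≤ _ := Finset.sum_le_sum (fun b _ => (row_card (4 * b) n).1)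
  · calc _ ≤ ∑ _b ∈ Finset.Icc (-(n:ℤ)) n, (2 * (n:ℤ) + 14) :=
          Finset.sum_le_sum (fun b _ => (row_card (4 * b) n).2)
      _ = (2 * (n:ℤ) + 1) * (2 * n + 14) := by
          rw [Finset.sum_const, hcard]; push_cast; ring

lemma density_main :
    Filter.Tendsto (fun n : ℕ => (gridCount (stdPattern 14 4) n : ℝ) / (2 * n + 1) ^ 2)
      Filter.atTop (nhds (1 / 14)) := by
  have htop : Tendsto (fun n : ℕ => (2 * (n:ℝ) + 1)) atTop atTop := by
    apply Filter.tendsto_atTop_add_const_right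
    exact (tendsto_natCast_atTop_atTop).const_mul_atTop (by norm_num)
  have hb : ∀ c : ℝ, Tendsto (fun n : ℕ => 1 / 14 + c / (2 * (n:ℝ) + 1)) atTop
      (nhds (1 / 14)) := by
    intro c
    have h0 : Tendsto (fun n : ℕ => c / (2 * (n:ℝ) + 1)) atTop (nhds 0) :=
      Filter.Tendsto.div_atTop tendsto_const_nhds htop
    simpa using tendsto_const_nhds.add h0
  refine tendsto_of_tendsto_of_tendsto_of_le_of_le (hb (-13/14)) (hb (13/14)) ?_ ?_
  · intro n
    dsimp only
    have hk := (gc_bounds n).1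
    have hG : (2 * (n:ℝ) + 1) * (2 * n - 12) ≤ 14 * (gridCount (stdPattern 14 4) n : ℝ) := by
      exact_mod_cast hk
    have hpos : (0:ℝ) < 2 * (n:ℝ) + 1 := by positivity
    have e1 : (1:ℝ)/14 + (-13/14) / (2 * (n:ℝ) + 1) =
        ((2 * (n:ℝ) + 1) * (2 * (n:ℝ) - 12)) / (14 * (2 * (n:ℝ) + 1) ^ 2) := by
      field_simp; ring
    rw [e1, div_le_div_iff₀ (by positivity) (by positivity)]
    nlinarith [mul_le_mul_of_nonneg_right hG (sq_nonneg (2 * (n:ℝ) + 1)), sq_nonneg (2*(n:ℝ)+1)]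
  · intro n
    dsimp only
    have hk := (gc_bounds n).2
    have hG : 14 * (gridCount (stdPattern 14 4) n : ℝ) ≤ (2 * (n:ℝ) + 1) * (2 * n + 14) := by
      exact_mod_cast hk
    have hpos : (0:ℝ) < 2 * (n:ℝ) + 1 := by positivity
    have e1 : (1:ℝ)/14 + (13/14) / (2 * (n:ℝ) + 1) =
        ((2 * (n:ℝ) + 1) * (2 * (n:ℝ) + 14)) / (14 * (2 * (n:ℝ) + 1) ^ 2) := by
      field_simp; ring
    rw [e1, div_le_div_iff₀ (by positivity) (by positivity)]
    nlinarith [mul_le_mul_of_nonneg_right hG (sq_nonneg (2 * (n:ℝ) + 1)), sq_nonneg (2*(n:ℝ)+1)]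

theorem stmt17 :
    IsBroadcast 5 5 (stdPattern 14 4) ∧
    (∃ S : Set (ℤ × ℤ), IsBroadcast 5 5 S ∧
      Filter.Tendsto (fun n : ℕ => (gridCount S n : ℝ) / (2 * n + 1) ^ 2)
        Filter.atTop (nhds (1 / 14))) ∧
    (1 : ℝ) / 14 < 1 / 13 := by
  refine ⟨broadcast_main, ⟨stdPattern 14 4, broadcast_main, density_main⟩, by norm_num⟩
end

section
/- Let t and r be positive integers, let d be a positive integer and e an integer with 0 ≤ e < d, and suppose the standard pattern T(d,e) = {(dx+ey, y) : x, y ∈ ℤ} is a (t,r) broadcast. Then d ≤ U(t,r)/r, where U(t,r) = ∑_{v ∈ ℤ×ℤ, dist(v,(0,0)) < t} min(t − dist(v,(0,0)), r) is the usable signal emitted by a single tower of strength t. -/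
open Filter Topology

/-- The usable signal `U(t,r) = ∑_{v, dist(v,0) < t} min(t − dist(v,0), r)`. -/
noncomputable def usableSignal (t r : ℕ) : ℕ :=
  ∑ v ∈ (Finset.Icc (-(t : ℤ)) (t : ℤ) ×ˢ Finset.Icc (-(t : ℤ)) (t : ℤ)).filter
      (fun v => gridDist v (0, 0) < t),
    min (t - gridDist v (0, 0)) r

/-- Subadditivity of truncation: `min (∑ f) r ≤ ∑ min (f i) r`. -/
lemma min_sum_le {α : Type*} (s : Finset α) (f : α → ℕ) (r : ℕ) :
    min (∑ i ∈ s, f i) r ≤ ∑ i ∈ s, min (f i) r := by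
  classical
  induction s using Finset.induction with
  | empty => simp
  | insert _ _ ha ih =>
    rename_i a s
    rw [Finset.sum_insert ha, Finset.sum_insert ha]
    omega

lemma mem_stdPattern_iff {d e : ℤ} (hd : 0 < d) (p : ℤ × ℤ) :
    p ∈ stdPattern d e ↔ d ∣ p.1 - e * p.2 := by
  constructor
  · rintro ⟨x, y, rfl⟩
    exact ⟨x, by ring⟩
  · rintro ⟨k, hk⟩
    exact ⟨k, p.2, by
      have : p.1 = d * k + e * p.2 := by linarith
      exact Prod.ext this rfl⟩

theorem stmt19 (t r : ℕ) (ht : 0 < t) (hr : 0 < r) (d e : ℤ) (hd : 0 < d)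
    (he0 : 0 ≤ e) (hed : e < d) (hbr : IsBroadcast t r (stdPattern d e)) :
    (d : ℝ) ≤ (usableSignal t r : ℝ) / (r : ℝ) := by
  classical
  set S := stdPattern d e with hS
  set B : Finset (ℤ × ℤ) :=
    Finset.Icc (-(t : ℤ)) (d - 1 + (t : ℤ)) ×ˢ Finset.Icc (-(t : ℤ)) (t : ℤ) with hB
  set Ball : Finset (ℤ × ℤ) :=
    (Finset.Icc (-(t : ℤ)) (t : ℤ) ×ˢ Finset.Icc (-(t : ℤ)) (t : ℤ)).filter
      (fun v => gridDist v (0, 0) < t) with hBall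
  have key : r * d.toNat ≤ usableSignal t r := by
    have step1 : r * d.toNat = ∑ _a ∈ Finset.Ico (0 : ℤ) d, r := by
      rw [Finset.sum_const, Int.card_Ico, smul_eq_mul]
      simp [mul_comm]
    have step2 : ∀ a ∈ Finset.Ico (0 : ℤ) d,
        r ≤ ∑ T ∈ (B.filter (fun T => T ∈ S ∧ gridDist (a, 0) T < t)),
          min (t - gridDist (a, 0) T) r := by
      intro a ha
      simp only [Finset.mem_Ico] at ha
      have hfe : ((Finset.Icc (a - (t : ℤ)) (a + (t : ℤ)) ×ˢ
          Finset.Icc ((0:ℤ) - (t : ℤ)) ((0:ℤ) + (t : ℤ))).filter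
          (fun T => T ∈ S ∧ gridDist (a, 0) T < t)) =
          B.filter (fun T => T ∈ S ∧ gridDist (a, 0) T < t) := by
        apply Finset.ext
        intro T
        simp only [Finset.mem_filter, Finset.mem_product, Finset.mem_Icc, hB]
        simp only [gridDist]
        constructor
        · rintro ⟨h1, h2, h3⟩
          exact ⟨by omega, h2, h3⟩
        · rintro ⟨h1, h2, h3⟩
          exact ⟨by omega, h2, h3⟩
      have h1 : r ≤ totalSignal t S (a, 0) := hbr (a, 0)
      have h2 : totalSignal t S (a, 0) =
          ∑ T ∈ (B.filter (fun T => T ∈ S ∧ gridDist (a, 0) T < t)),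
            (t - gridDist (a, 0) T) := by
        rw [totalSignal]
        rw [← hfe]
      calc r = min (totalSignal t S (a, 0)) r := (min_eq_right h1).symm
        _ = min (∑ T ∈ (B.filter (fun T => T ∈ S ∧ gridDist (a, 0) T < t)),
            (t - gridDist (a, 0) T)) r := by rw [h2]
        _ ≤ _ := min_sum_le _ _ _
    have step3 : ∑ a ∈ Finset.Ico (0 : ℤ) d,
        ∑ T ∈ (B.filter (fun T => T ∈ S ∧ gridDist (a, 0) T < t)),
          min (t - gridDist (a, 0) T) r
        = ∑ p ∈ ((Finset.Ico (0 : ℤ) d ×ˢ B).filter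
            (fun p => p.2 ∈ S ∧ gridDist (p.1, 0) p.2 < t)),
          min (t - gridDist (p.1, 0) p.2) r := by
      conv_rhs => rw [Finset.sum_filter, Finset.sum_product]
      refine Finset.sum_congr rfl fun a _ => ?_
      rw [Finset.sum_filter]
    have step4 : ∑ p ∈ ((Finset.Ico (0 : ℤ) d ×ˢ B).filter
          (fun p => p.2 ∈ S ∧ gridDist (p.1, 0) p.2 < t)),
        min (t - gridDist (p.1, 0) p.2) r
        = ∑ u ∈ Ball, min (t - gridDist u (0, 0)) r := by
      apply Finset.sum_nbij' (fun p => (p.1 - p.2.1, -p.2.2))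
        (fun u => ((u.1 - e * u.2) % d, ((u.1 - e * u.2) % d - u.1, -u.2)))
      · rintro ⟨a, T1, T2⟩ hp
        simp only [Finset.mem_filter, Finset.mem_product, Finset.mem_Icc, Finset.mem_Ico,
          hB] at hp
        simp only [gridDist] at hp
        obtain ⟨⟨_, _⟩, _, hdist⟩ := hp
        simp only [hBall, Finset.mem_filter, Finset.mem_product, Finset.mem_Icc]
        simp only [gridDist]
        omega
      · rintro ⟨u1, u2⟩ hu
        simp only [hBall, Finset.mem_filter, Finset.mem_product, Finset.mem_Icc] at hu
        simp only [gridDist] at hu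
        obtain ⟨⟨_, _⟩, hdist⟩ := hu
        have hd0 : d ≠ 0 := hd.ne'
        have hmn : 0 ≤ (u1 - e * u2) % d := Int.emod_nonneg _ hd0
        have hml : (u1 - e * u2) % d < d := Int.emod_lt_of_pos _ hd
        simp only [Finset.mem_filter, Finset.mem_product, Finset.mem_Icc, Finset.mem_Ico,
          gridDist, hB]
        refine ⟨⟨⟨hmn, hml⟩, by omega, by omega⟩, ?_, by omega⟩
        rw [hS, mem_stdPattern_iff hd]
        refine ⟨-((u1 - e * u2) / d), ?_⟩
        simp only
        rw [Int.emod_def]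
        ring
      · rintro ⟨a, T1, T2⟩ hp
        simp only [Finset.mem_filter, Finset.mem_product, Finset.mem_Ico] at hp
        obtain ⟨⟨⟨hp0, hpd⟩, _⟩, hpS, _⟩ := hp
        have hdvd : d ∣ T1 - e * T2 := (mem_stdPattern_iff hd (T1, T2)).mp hpS
        have hkey : (a - T1 - e * -T2) % d = a := by
          obtain ⟨k, hk⟩ := hdvd
          have h1 : a - T1 - e * -T2 = a - d * k := by
            have : T1 - e * T2 = d * k := hk
            linarith [this]
          rw [h1, Int.sub_emod, Int.mul_emod_right, sub_zero,
            Int.emod_emod_of_dvd _ dvd_rfl, Int.emod_eq_of_lt hp0 hpd]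
        simp only [hkey, Prod.mk.injEq]
        refine ⟨trivial, by ring, by ring⟩
      · rintro ⟨u1, u2⟩ hu
        simp only [Prod.mk.injEq]
        refine ⟨by ring, by ring⟩
      · rintro ⟨a, T1, T2⟩ hp
        have hg : gridDist ((a, T1, T2).1, 0) (a, T1, T2).2
            = gridDist (a - T1, -T2) (0, 0) := by
          simp only [gridDist]
          omega
        rw [hg]
    have step5 : (∑ u ∈ Ball, min (t - gridDist u (0, 0)) r) = usableSignal t r := rfl
    calc r * d.toNat = ∑ _a ∈ Finset.Ico (0 : ℤ) d, r := step1
      _ ≤ _ := Finset.sum_le_sum step2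
      _ = _ := step3
      _ = _ := step4
      _ = usableSignal t r := step5
  rw [le_div_iff₀ (by positivity : (0:ℝ) < (r:ℝ))]
  have h2 : ((r * d.toNat : ℕ) : ℝ) ≤ (usableSignal t r : ℝ) := Nat.cast_le.2 key
  push_cast at h2
  have hdd : (d.toNat : ℝ) = (d : ℝ) := by exact_mod_cast Int.toNat_of_nonneg hd.le
  rw [hdd] at h2
  linarith
end
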